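/- For each a ≠ 0 and b ∈ ℝ, the function u(x,y) = a²x/((y+b)² + x²) on U = {(x,y) | x < 0} satisfies (∂u/∂x)² + (∂u/∂y)² = (u/x)² and Δu = 0, and u(x,y) < 0 for all (x,y) ∈ U. -/

import Mathlib

noncomputable def pd1 (f : ℝ → ℝ → ℝ) (x y : ℝ) : ℝ := deriv (fun t => f t y) x
noncomputable def pd2 (f : ℝ → ℝ → ℝ) (x y : ℝ) : ℝ := deriv (fun t => f x t) y

lemma hd_x (a c x : ℝ) (hx : c ^ 2 + x ^ 2 ≠ 0) :
    HasDerivAt (fun t => a ^ 2 * t / (c ^ 2 + t ^ 2))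
      (a ^ 2 * (c ^ 2 - x ^ 2) / (c ^ 2 + x ^ 2) ^ 2) x := by
  have h1 : HasDerivAt (fun t : ℝ => a ^ 2 * t) (a ^ 2) x := by
    simpa using (hasDerivAt_id x).const_mul (a ^ 2)
  have h2 : HasDerivAt (fun t : ℝ => c ^ 2 + t ^ 2) (2 * x) x := by
    simpa using (hasDerivAt_pow 2 x).const_add (c ^ 2)
  have := h1.div h2 hx
  refine this.congr_deriv ?_
  field_simp
  ring

lemma hd_y (a c x y : ℝ) (hx : (y + c) ^ 2 + x ^ 2 ≠ 0) :
    HasDerivAt (fun t => a ^ 2 * x / ((t + c) ^ 2 + x ^ 2))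
      (-(2 * a ^ 2 * x * (y + c)) / ((y + c) ^ 2 + x ^ 2) ^ 2) y := by
  have h1 : HasDerivAt (fun _ : ℝ => a ^ 2 * x) 0 y := hasDerivAt_const _ _
  have h2 : HasDerivAt (fun t : ℝ => (t + c) ^ 2 + x ^ 2) (2 * (y + c)) y := by
    have : HasDerivAt (fun t : ℝ => t + c) 1 y := by
      simpa using (hasDerivAt_id y).add_const c
    simpa using (this.pow 2).add_const (x ^ 2)
  have := h1.div h2 hx
  refine this.congr_deriv ?_
  field_simp
  ring

lemma hd_xx (a c x : ℝ) (hx : c ^ 2 + x ^ 2 ≠ 0) :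
    HasDerivAt (fun t => a ^ 2 * (c ^ 2 - t ^ 2) / (c ^ 2 + t ^ 2) ^ 2)
      (a ^ 2 * (2 * x ^ 3 - 6 * c ^ 2 * x) / (c ^ 2 + x ^ 2) ^ 3) x := by
  have h1 : HasDerivAt (fun t : ℝ => a ^ 2 * (c ^ 2 - t ^ 2)) (a ^ 2 * (-(2 * x))) x := by
    have : HasDerivAt (fun t : ℝ => c ^ 2 - t ^ 2) (-(2 * x)) x := by
      simpa using (hasDerivAt_pow 2 x).const_sub (c ^ 2)
    exact this.const_mul _
  have h2 : HasDerivAt (fun t : ℝ => (c ^ 2 + t ^ 2) ^ 2) (2 * (c ^ 2 + x ^ 2) * (2 * x)) x := by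
    have hin : HasDerivAt (fun t : ℝ => c ^ 2 + t ^ 2) (2 * x) x := by
      simpa using (hasDerivAt_pow 2 x).const_add (c ^ 2)
    have := hin.pow 2
    simpa [Pi.pow_def, mul_comm, mul_assoc, mul_left_comm] using this
  have h2' : ((c ^ 2 + x ^ 2) ^ 2 : ℝ) ≠ 0 := pow_ne_zero _ hx
  have := h1.div h2 h2'
  refine this.congr_deriv ?_
  field_simp
  ring

lemma hd_yy (a c x y : ℝ) (hx : (y + c) ^ 2 + x ^ 2 ≠ 0) :
    HasDerivAt (fun t => -(2 * a ^ 2 * x * (t + c)) / ((t + c) ^ 2 + x ^ 2) ^ 2)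
      ((-(2 * a ^ 2 * x) * ((y + c) ^ 2 + x ^ 2) ^ 2 -
        -(2 * a ^ 2 * x * (y + c)) * (2 * ((y + c) ^ 2 + x ^ 2) * (2 * (y + c)))) /
        (((y + c) ^ 2 + x ^ 2) ^ 2) ^ 2) y := by
  have hin : HasDerivAt (fun t : ℝ => t + c) 1 y := by
    simpa using (hasDerivAt_id y).add_const c
  have h1 : HasDerivAt (fun t : ℝ => -(2 * a ^ 2 * x * (t + c))) (-(2 * a ^ 2 * x)) y := by
    simpa [Pi.neg_def] using ((hin.const_mul (2 * a ^ 2 * x)).neg)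
  have h2 : HasDerivAt (fun t : ℝ => ((t + c) ^ 2 + x ^ 2) ^ 2)
      (2 * ((y + c) ^ 2 + x ^ 2) * (2 * (y + c))) y := by
    have hd : HasDerivAt (fun t : ℝ => (t + c) ^ 2 + x ^ 2) (2 * (y + c)) y := by
      simpa using (hin.pow 2).add_const (x ^ 2)
    have := hd.pow 2
    simpa [Pi.pow_def, mul_comm, mul_assoc, mul_left_comm] using this
  exact h1.div h2 (pow_ne_zero _ hx)

theorem stmt3 (a b : ℝ) (ha : a ≠ 0) :
    ∀ x y : ℝ, x < 0 →
      (pd1 (fun x y => a ^ 2 * x / ((y + b) ^ 2 + x ^ 2)) x y) ^ 2 +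
          (pd2 (fun x y => a ^ 2 * x / ((y + b) ^ 2 + x ^ 2)) x y) ^ 2 =
        ((a ^ 2 * x / ((y + b) ^ 2 + x ^ 2)) / x) ^ 2 ∧
      pd1 (pd1 (fun x y => a ^ 2 * x / ((y + b) ^ 2 + x ^ 2))) x y +
          pd2 (pd2 (fun x y => a ^ 2 * x / ((y + b) ^ 2 + x ^ 2))) x y = 0 ∧
      a ^ 2 * x / ((y + b) ^ 2 + x ^ 2) < 0 := by
  intro x y hx
  have hx0 : x ≠ 0 := ne_of_lt hx
  have hDpos : 0 < (y + b) ^ 2 + x ^ 2 := by positivity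
  have hD : (y + b) ^ 2 + x ^ 2 ≠ 0 := ne_of_gt hDpos
  -- first partials
  have e1 : pd1 (fun x y => a ^ 2 * x / ((y + b) ^ 2 + x ^ 2)) x y =
      a ^ 2 * ((y + b) ^ 2 - x ^ 2) / ((y + b) ^ 2 + x ^ 2) ^ 2 := by
    simpa [pd1] using (hd_x a (y + b) x hD).deriv
  have e2 : pd2 (fun x y => a ^ 2 * x / ((y + b) ^ 2 + x ^ 2)) x y =
      -(2 * a ^ 2 * x * (y + b)) / ((y + b) ^ 2 + x ^ 2) ^ 2 := by
    simpa [pd2] using (hd_y a b x y hD).deriv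
  -- pd1 pd1 : pd1 u equals the explicit formula on a neighborhood of x
  have e11 : pd1 (pd1 (fun x y => a ^ 2 * x / ((y + b) ^ 2 + x ^ 2))) x y =
      a ^ 2 * (2 * x ^ 3 - 6 * (y + b) ^ 2 * x) / ((y + b) ^ 2 + x ^ 2) ^ 3 := by
    have hEv : (fun t => pd1 (fun x y => a ^ 2 * x / ((y + b) ^ 2 + x ^ 2)) t y) =ᶠ[nhds x]
        (fun t => a ^ 2 * ((y + b) ^ 2 - t ^ 2) / ((y + b) ^ 2 + t ^ 2) ^ 2) := by
      filter_upwards [isOpen_Iio.mem_nhds (show x ∈ Set.Iio 0 from hx)] with t ht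
      have ht0 : t ≠ 0 := ne_of_lt ht
      have hDt : (y + b) ^ 2 + t ^ 2 ≠ 0 := by positivity
      simpa [pd1] using (hd_x a (y + b) t hDt).deriv
    rw [pd1, hEv.deriv_eq]
    exact (hd_xx a (y + b) x hD).deriv
  have e22 : pd2 (pd2 (fun x y => a ^ 2 * x / ((y + b) ^ 2 + x ^ 2))) x y =
      ((-(2 * a ^ 2 * x) * ((y + b) ^ 2 + x ^ 2) ^ 2 -
        -(2 * a ^ 2 * x * (y + b)) * (2 * ((y + b) ^ 2 + x ^ 2) * (2 * (y + b)))) /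
        (((y + b) ^ 2 + x ^ 2) ^ 2) ^ 2) := by
    have hfun : (fun t => pd2 (fun x y => a ^ 2 * x / ((y + b) ^ 2 + x ^ 2)) x t) =
        (fun t => -(2 * a ^ 2 * x * (t + b)) / ((t + b) ^ 2 + x ^ 2) ^ 2) := by
      funext t
      have hDt : (t + b) ^ 2 + x ^ 2 ≠ 0 := by positivity
      simpa [pd2] using (hd_y a b x t hDt).deriv
    rw [pd2, hfun]
    exact (hd_yy a b x y hD).deriv
  refine ⟨?_, ?_, ?_⟩
  · rw [e1, e2]
    field_simp
    ring
  · rw [e11, e22]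
    field_simp
    ring
  · have : 0 < a ^ 2 := by positivity
    exact div_neg_of_neg_of_pos (by nlinarith) hDpos
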